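/- Fix τ' < τ'' < τ and set S'' = Ψ_F(S(τ'')). Then sup_{z ∈ S''} |F^{∘q_n}(z) − z − p_n| → 0 as n → ∞. More precisely, with C₁ = max_{w ∈ cl(S(τ''))} |Ψ_F'(w)|, one has sup_{z ∈ S''} |F^{∘q_n}(z) − z − p_n| ≤ C₁/q_n. -/

import Mathlib

open Filter Real Set Topology

/-- The open horizontal strip `S(τ) = {z ∈ ℂ : |Im z| < τ}`. -/
def Strip (τ : ℝ) : Set ℂ := {z : ℂ | |z.im| < τ}

/-- Lemma 2 of the paper: on `S'' = Ψ_F(S(τ''))` with `τ' < τ'' < τ`, one has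
`|F^{∘q_n}(z) - z - p_n| ≤ C₁/q_n` where `C₁` bounds `|Ψ_F'|` on the closure of
`S(τ'')`; in particular `sup_{z ∈ S''} |F^{∘q_n}(z) - z - p_n| → 0`. -/
theorem sup_iterate_sub_translation_tendsto_zero
    (F : ℝ → ℝ)
    (hFanal : ∀ x : ℝ, AnalyticAt ℝ F x)
    (hFmono : StrictMono F)
    (hFbij : Function.Bijective F)
    (hFderiv : ∀ x : ℝ, 0 < deriv F x)
    (hFper : ∀ x : ℝ, F (x + 1) = F x + 1)
    (θ : ℝ) (hirr : Irrational θ)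
    (hTrans : ∀ x : ℝ, Tendsto (fun n : ℕ => (F^[n] x - x) / n) atTop (𝓝 θ))
    -- Herman strip of modulus `2τ`
    (τ : ℝ) (hτ : 0 < τ)
    (Φ : ℝ → ℝ) (hΦmono : StrictMono Φ)
    (hΦper : ∀ x : ℝ, Φ (x + 1) = Φ x + 1)
    (hΦconj : ∀ x : ℝ, Φ (F x) = Φ x + θ)
    (Ψ : ℂ → ℂ)
    (hΨΦ : ∀ x : ℝ, Ψ ((Φ x : ℝ) : ℂ) = (x : ℂ))
    (hΨdiff : DifferentiableOn ℂ Ψ (Strip τ))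
    (hΨinj : Set.InjOn Ψ (Strip τ))
    (hΨper : ∀ z ∈ Strip τ, Ψ (z + 1) = Ψ z + 1)
    (Fc : ℂ → ℂ)
    (hFcreal : ∀ x : ℝ, Fc (x : ℂ) = ((F x : ℝ) : ℂ))
    (hFcdiff : DifferentiableOn ℂ Fc (Ψ '' Strip τ))
    (hFcper : ∀ z ∈ Ψ '' Strip τ, Fc (z + 1) = Fc z + 1)
    (hFclin : ∀ z ∈ Strip τ, Fc (Ψ z) = Ψ (z + (θ : ℂ)))
    -- `τ' < τ'' < τ`
    (τ' τ'' : ℝ) (hτ'pos : 0 < τ') (hτ'τ'' : τ' < τ'') (hτ''τ : τ'' < τ)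
    -- continued fraction convergents `p_n/q_n` of `θ`
    (pn : ℕ → ℤ) (qn : ℕ → ℕ)
    (hqpos : ∀ n, 0 < qn n)
    (hqtend : Tendsto qn atTop atTop)
    (hcop : ∀ n, Nat.Coprime (pn n).natAbs (qn n))
    (hconv : ∀ n, |θ - (pn n : ℝ) / (qn n : ℝ)| ≤ 1 / (qn n : ℝ) ^ 2)
    -- `C₁ = max_{w ∈ cl(S(τ''))} |Ψ_F'(w)|`
    (C₁ : ℝ) (hC₁ : ∀ w ∈ closure (Strip τ''), ‖deriv Ψ w‖ ≤ C₁) :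
    (∀ n, ∀ z ∈ Ψ '' Strip τ'',
      ‖Fc^[qn n] z - z - ((pn n : ℤ) : ℂ)‖ ≤ C₁ / (qn n : ℝ))
    ∧ TendstoUniformlyOn (fun n z => Fc^[qn n] z - z - ((pn n : ℤ) : ℂ))
        (fun _ => 0) atTop (Ψ '' Strip τ'') := by
  -- basic facts about strips
  have hstrip_mem : ∀ (t : ℝ) (z : ℂ), z ∈ Strip t ↔ |z.im| < t := fun t z => Iff.rfl
  have hsub : Strip τ'' ⊆ Strip τ := fun z hz => lt_trans hz hτ''τ
  have hopen : IsOpen (Strip τ) := by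
    have : Strip τ = Complex.im ⁻¹' Set.Ioo (-τ) τ := by
      ext z; simp [Strip, abs_lt]
    rw [this]; exact isOpen_Ioo.preimage Complex.continuous_im
  have hconvex : Convex ℝ (Strip τ'') := by
    have : Strip τ'' = Complex.imLm ⁻¹' Set.Ioo (-τ'') τ'' := by
      ext z; simp [Strip, abs_lt, Complex.imLm]
    rw [this]; exact (convex_Ioo (-τ'') τ'').linear_preimage Complex.imLm
  -- adding a real number does not change membership
  have hmem : ∀ {t : ℝ} (w : ℂ) (r : ℝ), w ∈ Strip t → (w + (r : ℂ)) ∈ Strip t := by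
    intro t w r hw
    have : (w + (r : ℂ)).im = w.im := by simp
    show |(w + (r : ℂ)).im| < t
    rw [this]; exact hw
  have hmemZ : ∀ {t : ℝ} (w : ℂ) (m : ℤ), w ∈ Strip t → (w + (m : ℂ)) ∈ Strip t := by
    intro t w m hw
    have : ((m : ℝ) : ℂ) = (m : ℂ) := by push_cast; ring
    simpa [this] using hmem w (m : ℝ) hw
  -- iterating `Fc` on the image of the strip
  have hiter : ∀ (k : ℕ) (w : ℂ), w ∈ Strip τ →
      Fc^[k] (Ψ w) = Ψ (w + (k : ℂ) * (θ : ℂ)) := by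
    intro k
    induction k with
    | zero => intro w hw; simp
    | succ k ih =>
      intro w hw
      have hwk : w + (k : ℂ) * (θ : ℂ) ∈ Strip τ := by
        have : (k : ℂ) * (θ : ℂ) = (((k : ℝ) * θ : ℝ) : ℂ) := by push_cast; ring
        rw [this]; exact hmem w _ hw
      rw [Function.iterate_succ_apply', ih w hw, hFclin _ hwk]
      congr 1
      push_cast; ring
  -- integer translations of `Ψ`
  have hΨint : ∀ (m : ℤ) (w : ℂ), w ∈ Strip τ → Ψ (w + (m : ℂ)) = Ψ w + (m : ℂ) := by
    intro m
    induction m using Int.induction_on with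
    | zero => intro w hw; simp
    | succ k ih =>
      intro w hw
      have h1 : w + (((k : ℤ) + 1 : ℤ) : ℂ) = (w + ((k : ℤ) : ℂ)) + 1 := by push_cast; ring
      rw [h1, hΨper _ (hmemZ w (k : ℤ) hw), ih w hw]
      push_cast; ring
    | pred k ih =>
      intro w hw
      have h1 : (w + ((-(k : ℤ) - 1 : ℤ) : ℂ)) + 1 = w + ((-(k : ℤ) : ℤ) : ℂ) := by
        push_cast; ring
      have h2 := hΨper _ (hmemZ w (-(k : ℤ) - 1) hw)
      rw [h1, ih w hw] at h2
      have h3 : Ψ (w + ((-(k : ℤ) - 1 : ℤ) : ℂ)) = Ψ w + ((-(k : ℤ) : ℤ) : ℂ) - 1 := by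
        linear_combination -h2
      rw [h3]; push_cast; ring
  -- nonnegativity of C₁
  have h0mem : (0 : ℂ) ∈ Strip τ'' := by
    show |(0 : ℂ).im| < τ''
    simpa using lt_trans hτ'pos hτ'τ''
  have hC₁nonneg : 0 ≤ C₁ :=
    le_trans (norm_nonneg _) (hC₁ 0 (subset_closure h0mem))
  -- differentiability and derivative bound on Strip τ''
  have hdiff : ∀ x ∈ Strip τ'', DifferentiableAt ℂ Ψ x := fun x hx =>
    hΨdiff.differentiableAt (hopen.mem_nhds (hsub hx))
  have hbound : ∀ x ∈ Strip τ'', ‖fderiv ℂ Ψ x‖ ≤ C₁ := fun x hx => by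
    rw [← norm_deriv_eq_norm_fderiv]
    exact hC₁ x (subset_closure hx)
  -- main estimate
  have main : ∀ n, ∀ z ∈ Ψ '' Strip τ'',
      ‖Fc^[qn n] z - z - ((pn n : ℤ) : ℂ)‖ ≤ C₁ / (qn n : ℝ) := by
    intro n z hz
    obtain ⟨w, hw, rfl⟩ := hz
    have hw' : w ∈ Strip τ := hsub hw
    have hq : (0 : ℝ) < (qn n : ℝ) := by exact_mod_cast hqpos n
    -- rewrite the iterate
    have e1 : Fc^[qn n] (Ψ w) = Ψ (w + ((qn n : ℕ) : ℂ) * (θ : ℂ)) := hiter (qn n) w hw'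
    have e2 : Ψ (w + ((pn n : ℤ) : ℂ)) = Ψ w + ((pn n : ℤ) : ℂ) := hΨint (pn n) w hw'
    have e3 : Fc^[qn n] (Ψ w) - Ψ w - ((pn n : ℤ) : ℂ)
        = Ψ (w + ((qn n : ℕ) : ℂ) * (θ : ℂ)) - Ψ (w + ((pn n : ℤ) : ℂ)) := by
      rw [e1, e2]; ring
    -- memberships in Strip τ''
    have hm1 : w + ((qn n : ℕ) : ℂ) * (θ : ℂ) ∈ Strip τ'' := by
      have : ((qn n : ℕ) : ℂ) * (θ : ℂ) = ((((qn n : ℕ) : ℝ) * θ : ℝ) : ℂ) := by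
        push_cast; ring
      rw [this]; exact hmem w _ hw
    have hm2 : w + ((pn n : ℤ) : ℂ) ∈ Strip τ'' := hmemZ w (pn n) hw
    -- mean value estimate
    have hmv := hconvex.norm_image_sub_le_of_norm_fderiv_le hdiff hbound hm2 hm1
    -- compute the distance between the arguments
    have e4 : (w + ((qn n : ℕ) : ℂ) * (θ : ℂ)) - (w + ((pn n : ℤ) : ℂ))
        = ((((qn n : ℕ) : ℝ) * θ - ((pn n : ℤ) : ℝ) : ℝ) : ℂ) := by
      push_cast; ring
    have e5 : ‖(w + ((qn n : ℕ) : ℂ) * (θ : ℂ)) - (w + ((pn n : ℤ) : ℂ))‖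
        = |((qn n : ℕ) : ℝ) * θ - ((pn n : ℤ) : ℝ)| := by
      rw [e4, Complex.norm_real, Real.norm_eq_abs]
    -- the arithmetic bound |qθ - p| ≤ 1/q
    have harith : |((qn n : ℕ) : ℝ) * θ - ((pn n : ℤ) : ℝ)| ≤ 1 / (qn n : ℝ) := by
      have h := hconv n
      have e6 : ((qn n : ℕ) : ℝ) * θ - ((pn n : ℤ) : ℝ)
          = ((qn n : ℕ) : ℝ) * (θ - ((pn n : ℤ) : ℝ) / ((qn n : ℕ) : ℝ)) := by
        field_simp
      rw [e6, abs_mul, abs_of_pos hq]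
      calc ((qn n : ℕ) : ℝ) * |θ - ((pn n : ℤ) : ℝ) / ((qn n : ℕ) : ℝ)|
          ≤ ((qn n : ℕ) : ℝ) * (1 / ((qn n : ℕ) : ℝ) ^ 2) := by
            exact mul_le_mul_of_nonneg_left h (le_of_lt hq)
        _ = 1 / ((qn n : ℕ) : ℝ) := by field_simp
    calc ‖Fc^[qn n] (Ψ w) - Ψ w - ((pn n : ℤ) : ℂ)‖
        = ‖Ψ (w + ((qn n : ℕ) : ℂ) * (θ : ℂ)) - Ψ (w + ((pn n : ℤ) : ℂ))‖ := by rw [e3]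
      _ ≤ C₁ * ‖(w + ((qn n : ℕ) : ℂ) * (θ : ℂ)) - (w + ((pn n : ℤ) : ℂ))‖ := hmv
      _ = C₁ * |((qn n : ℕ) : ℝ) * θ - ((pn n : ℤ) : ℝ)| := by rw [e5]
      _ ≤ C₁ * (1 / (qn n : ℝ)) := mul_le_mul_of_nonneg_left harith hC₁nonneg
      _ = C₁ / (qn n : ℝ) := by ring
  refine ⟨main, ?_⟩
  rw [Metric.tendstoUniformlyOn_iff]
  intro ε hε
  have h0 : Tendsto (fun n => C₁ / (qn n : ℝ)) atTop (𝓝 0) :=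
    Tendsto.div_atTop tendsto_const_nhds (tendsto_natCast_atTop_atTop.comp hqtend)
  have hev : ∀ᶠ n in atTop, C₁ / (qn n : ℝ) < ε := h0.eventually_lt_const hε
  filter_upwards [hev] with n hn z hz
  have := main n z hz
  calc dist 0 (Fc^[qn n] z - z - ((pn n : ℤ) : ℂ))
      = ‖Fc^[qn n] z - z - ((pn n : ℤ) : ℂ)‖ := by rw [dist_zero_left]
    _ ≤ C₁ / (qn n : ℝ) := this
    _ < ε := hn
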